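/- arXiv:1609.07581 — 2 statements merged into one kernel-verified Lean document; each statement's English description precedes it below -/
import Mathlib

section
/- Let ρ be a density matrix on ℂ^{d_A} ⊗ ℂ^{d_B}, let E_A = {E_{a|x}} be an Alice POVM family on ℂ^{d_A} and E_B = {E_{b|y}} a Bob POVM family on ℂ^{d_B}, and let B = {B_{ab|xy}} be a Bell functional with nonnegative coefficients and ω(B) > 0. Let P be the quantum correlation P(a,b|x,y) = tr[ρ (E_{a|x} ⊗ E_{b|y})], and let F_(B;E_B) be the induced steering functional with F_{a|x} = ∑_{b,y} B_{ab|xy} E_{b|y} (assume ω_s(F_(B;E_B)) > 0). Then the nonlocality fraction is bounded by the steering fraction: Γ(P, B) ≤ Γ_s({ρ, E_A}, F_(B;E_B)). -/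
open scoped ComplexOrder Kronecker Matrix
open MeasureTheory

noncomputable section

namespace QSteer

/-- Square complex matrices indexed by `ι` (the Hilbert space `ℂ^ι`). -/
abbrev HMat (ι : Type) : Type := Matrix ι ι ℂ

/-- A density matrix: positive semidefinite with unit trace. -/
def IsDensity {ι : Type} [Fintype ι] (ρ : HMat ι) : Prop :=
  ρ.PosSemidef ∧ ρ.trace = 1

/-- A POVM family `{E_{a|x}}`: positive semidefinite effects summing to the identity
for every setting `x`. -/
def IsPOVM {ι A X : Type} [Fintype ι] [Fintype A] [DecidableEq ι]
    (E : A → X → HMat ι) : Prop :=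
  (∀ a x, (E a x).PosSemidef) ∧ ∀ x, ∑ a, E a x = 1

/-- A projective measurement family: a POVM family whose effects are orthogonal
projections. -/
def IsProjPOVM {ι A X : Type} [Fintype ι] [Fintype A] [DecidableEq ι]
    (E : A → X → HMat ι) : Prop :=
  IsPOVM E ∧ ∀ a x, (E a x).IsHermitian ∧ E a x * E a x = E a x

/-- An assemblage `{σ_{a|x}}`: positive semidefinite matrices such that `∑_a σ_{a|x}`
is the same unit-trace matrix for every `x`. -/
def IsAssemblage {ι A X : Type} [Fintype ι] [Fintype A] (σ : A → X → HMat ι) : Prop :=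
  (∀ a x, (σ a x).PosSemidef) ∧ (∀ x x', ∑ a, σ a x = ∑ a, σ a x') ∧
    ∀ x, (∑ a, σ a x).trace = 1

/-- An unsteerable assemblage: one admitting a local-hidden-state model. -/
def IsUnsteerable {ι A X : Type} [Fintype ι] [Fintype A] (σ : A → X → HMat ι) : Prop :=
  ∃ (n : ℕ) (w : Fin n → ℝ) (p : A → X → Fin n → ℝ) (τ : Fin n → HMat ι),
    (∀ l, 0 ≤ w l) ∧ (∑ l, w l = 1) ∧
    (∀ a x l, 0 ≤ p a x l) ∧ (∀ x l, ∑ a, p a x l = 1) ∧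
    (∀ l, IsDensity (τ l)) ∧
    ∀ a x, σ a x = ∑ l, (w l * p a x l) • τ l

/-- A steering functional `{F_{a|x}}`: a family of positive semidefinite matrices. -/
def IsSteeringFunctional {ι A X : Type} [Fintype ι] (F : A → X → HMat ι) : Prop :=
  ∀ a x, (F a x).PosSemidef

/-- The value `∑_{a,x} tr(F_{a|x} σ_{a|x})` (real part). -/
def steeringValue {ι A X : Type} [Fintype ι] [Fintype A] [Fintype X]
    (F σ : A → X → HMat ι) : ℝ :=
  ∑ x, ∑ a, ((F a x * σ a x).trace).re

/-- The steering bound `ω_s(F)`. -/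
def steeringBound {ι A X : Type} [Fintype ι] [Fintype A] [Fintype X]
    (F : A → X → HMat ι) : ℝ :=
  sSup {r : ℝ | ∃ σ : A → X → HMat ι, IsAssemblage σ ∧ IsUnsteerable σ ∧
    r = steeringValue F σ}

/-- The steering fraction `Γ_s(σ, F)`. -/
def steeringFraction {ι A X : Type} [Fintype ι] [Fintype A] [Fintype X]
    (σ F : A → X → HMat ι) : ℝ :=
  steeringValue F σ / steeringBound F

/-- Partial trace over the first (Alice's) tensor factor. -/
def ptraceA {ιA ιB : Type} [Fintype ιA] (M : Matrix (ιA × ιB) (ιA × ιB) ℂ) : HMat ιB :=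
  Matrix.of fun j j' => ∑ i, M (i, j) (i, j')

/-- The assemblage induced by a bipartite state and Alice's POVMs:
`σ_{a|x} = Tr_A[ρ (E_{a|x} ⊗ I)]`. -/
def inducedAssemblage {ιA ιB A X : Type} [Fintype ιA] [Fintype ιB] [DecidableEq ιB]
    (ρ : Matrix (ιA × ιB) (ιA × ιB) ℂ) (E : A → X → HMat ιA) : A → X → HMat ιB :=
  fun a x => ptraceA (ρ * ((E a x) ⊗ₖ (1 : HMat ιB)))

/-- Largest steering-inequality violation `LV_s(ρ, F)` over Alice POVM families. -/
def LVs {ιA ιB A X : Type} [Fintype ιA] [Fintype ιB] [DecidableEq ιA] [DecidableEq ιB]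
    [Fintype A] [Fintype X]
    (ρ : Matrix (ιA × ιB) (ιA × ιB) ℂ) (F : A → X → HMat ιB) : ℝ :=
  sSup {r : ℝ | ∃ E : A → X → HMat ιA, IsPOVM E ∧
    r = steeringFraction (inducedAssemblage ρ E) F}

/-- Largest steering-inequality violation `LV_s^π(ρ, F)` over projective Alice families. -/
def LVsProj {ιA ιB A X : Type} [Fintype ιA] [Fintype ιB] [DecidableEq ιA] [DecidableEq ιB]
    [Fintype A] [Fintype X]
    (ρ : Matrix (ιA × ιB) (ιA × ιB) ℂ) (F : A → X → HMat ιB) : ℝ :=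
  sSup {r : ℝ | ∃ E : A → X → HMat ιA, IsProjPOVM E ∧
    r = steeringFraction (inducedAssemblage ρ E) F}

/-- The maximally entangled state `|Ψ⁺⟩⟨Ψ⁺|` on `ℂ^ι ⊗ ℂ^ι`. -/
def maxEnt (ι : Type) [Fintype ι] [DecidableEq ι] : Matrix (ι × ι) (ι × ι) ℂ :=
  Matrix.of fun pq rs => if pq.1 = pq.2 ∧ rs.1 = rs.2 then ((Fintype.card ι : ℂ))⁻¹ else 0

/-- The fully entangled fraction `F(ρ) = sup_U ⟨Ψ⁺|(U ⊗ I) ρ (U ⊗ I)†|Ψ⁺⟩`. -/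
def fef {ι : Type} [Fintype ι] [DecidableEq ι] (ρ : Matrix (ι × ι) (ι × ι) ℂ) : ℝ :=
  sSup {r : ℝ | ∃ U : Matrix ι ι ℂ, U ∈ Matrix.unitaryGroup ι ℂ ∧
    r = ((maxEnt ι * ((U ⊗ₖ (1 : HMat ι)) * ρ * ((U ⊗ₖ (1 : HMat ι))ᴴ))).trace).re}

/-- A local-hidden-variable (Bell-local) correlation. -/
def IsLHV {A B X Y : Type} [Fintype A] [Fintype B] (P : A → B → X → Y → ℝ) : Prop :=
  ∃ (n : ℕ) (w : Fin n → ℝ) (pA : A → X → Fin n → ℝ) (pB : B → Y → Fin n → ℝ),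
    (∀ l, 0 ≤ w l) ∧ (∑ l, w l = 1) ∧
    (∀ a x l, 0 ≤ pA a x l) ∧ (∀ x l, ∑ a, pA a x l = 1) ∧
    (∀ b y l, 0 ≤ pB b y l) ∧ (∀ y l, ∑ b, pB b y l = 1) ∧
    ∀ a b x y, P a b x y = ∑ l, w l * pA a x l * pB b y l

/-- The Bell value `∑ B_{ab|xy} P(a,b|x,y)`. -/
def bellValue {A B X Y : Type} [Fintype A] [Fintype B] [Fintype X] [Fintype Y]
    (Bf P : A → B → X → Y → ℝ) : ℝ :=
  ∑ x, ∑ y, ∑ a, ∑ b, Bf a b x y * P a b x y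

/-- The local bound `ω(B)`. -/
def localBound {A B X Y : Type} [Fintype A] [Fintype B] [Fintype X] [Fintype Y]
    (Bf : A → B → X → Y → ℝ) : ℝ :=
  sSup {r : ℝ | ∃ P : A → B → X → Y → ℝ, IsLHV P ∧ r = bellValue Bf P}

/-- The nonlocality fraction `Γ(P, B)`. -/
def nonlocalityFraction {A B X Y : Type} [Fintype A] [Fintype B] [Fintype X] [Fintype Y]
    (P Bf : A → B → X → Y → ℝ) : ℝ :=
  bellValue Bf P / localBound Bf

/-- The quantum correlation `P(a,b|x,y) = tr[ρ (E_{a|x} ⊗ E_{b|y})]`. -/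
def quantumCorr {ιA ιB A B X Y : Type} [Fintype ιA] [Fintype ιB]
    (ρ : Matrix (ιA × ιB) (ιA × ιB) ℂ) (EA : A → X → HMat ιA) (EB : B → Y → HMat ιB) :
    A → B → X → Y → ℝ :=
  fun a b x y => ((ρ * ((EA a x) ⊗ₖ (EB b y))).trace).re

/-- Largest Bell-inequality violation `LV(ρ, B)` over pairs of POVM families. -/
def LV {ιA ιB A B X Y : Type} [Fintype ιA] [Fintype ιB] [DecidableEq ιA] [DecidableEq ιB]
    [Fintype A] [Fintype B] [Fintype X] [Fintype Y]
    (ρ : Matrix (ιA × ιB) (ιA × ιB) ℂ) (Bf : A → B → X → Y → ℝ) : ℝ :=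
  sSup {r : ℝ | ∃ (EA : A → X → HMat ιA) (EB : B → Y → HMat ιB),
    IsPOVM EA ∧ IsPOVM EB ∧ r = nonlocalityFraction (quantumCorr ρ EA EB) Bf}

/-- Largest Bell-inequality violation `LV^π(ρ, B)` over pairs of projective families. -/
def LVProj {ιA ιB A B X Y : Type} [Fintype ιA] [Fintype ιB] [DecidableEq ιA] [DecidableEq ιB]
    [Fintype A] [Fintype B] [Fintype X] [Fintype Y]
    (ρ : Matrix (ιA × ιB) (ιA × ιB) ℂ) (Bf : A → B → X → Y → ℝ) : ℝ :=
  sSup {r : ℝ | ∃ (EA : A → X → HMat ιA) (EB : B → Y → HMat ιB),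
    IsProjPOVM EA ∧ IsProjPOVM EB ∧ r = nonlocalityFraction (quantumCorr ρ EA EB) Bf}

/-- The steering functional induced by a Bell functional and Bob's POVMs:
`F_{a|x} = ∑_{b,y} B_{ab|xy} E_{b|y}`. -/
def inducedF {ιB A B X Y : Type} [Fintype B] [Fintype Y]
    (Bf : A → B → X → Y → ℝ) (EB : B → Y → HMat ιB) : A → X → HMat ιB :=
  fun a x => ∑ y, ∑ b, Bf a b x y • EB b y

/-- The `k`-fold tensor power of a bipartite state, regrouped as a bipartite state on
`ℂ^{d^k} ⊗ ℂ^{d^k}` (Alice's factors grouped together, likewise Bob's). -/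
def tensorPower {ι : Type} (ρ : Matrix (ι × ι) (ι × ι) ℂ) (k : ℕ) :
    Matrix ((Fin k → ι) × (Fin k → ι)) ((Fin k → ι) × (Fin k → ι)) ℂ :=
  Matrix.of fun p q => ∏ t, ρ (p.1 t, p.2 t) (q.1 t, q.2 t)

/-- The isotropic state `ρ_iso(p) = p |Ψ⁺⟩⟨Ψ⁺| + (1-p) I/d²` on `ℂ^d ⊗ ℂ^d`. -/
def iso (d : ℕ) (p : ℝ) : Matrix (Fin d × Fin d) (Fin d × Fin d) ℂ :=
  p • maxEnt (Fin d) + ((1 - p) / (d : ℝ) ^ 2) • (1 : Matrix (Fin d × Fin d) (Fin d × Fin d) ℂ)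

/-- `sup_F Γ_s(σ, F)` over positive semidefinite steering functionals with positive
steering bound. -/
def supFrac {ι A X : Type} [Fintype ι] [Fintype A] [Fintype X] (σ : A → X → HMat ι) : ℝ :=
  sSup {r : ℝ | ∃ F : A → X → HMat ι, IsSteeringFunctional F ∧ 0 < steeringBound F ∧
    r = steeringFraction σ F}

/-- The optimal steering fraction `S_O(σ) = max{0, sup_F Γ_s(σ, F) − 1}`. -/
def SO {ι A X : Type} [Fintype ι] [Fintype A] [Fintype X] (σ : A → X → HMat ι) : ℝ :=
  max 0 (supFrac σ - 1)

/-- The steerable weight `S_W(σ)`. -/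
def SW {ι A X : Type} [Fintype ι] [Fintype A] [Fintype X] (σ : A → X → HMat ι) : ℝ :=
  sInf {ν : ℝ | 0 ≤ ν ∧ ν ≤ 1 ∧ ∃ σUS σS : A → X → HMat ι,
    IsAssemblage σUS ∧ IsUnsteerable σUS ∧ IsAssemblage σS ∧
    ∀ a x, σ a x = (1 - ν) • σUS a x + ν • σS a x}

/-- The steering robustness `S_R(σ)`. -/
def SR {ι A X : Type} [Fintype ι] [Fintype A] [Fintype X] (σ : A → X → HMat ι) : ℝ :=
  sInf {ν : ℝ | 0 ≤ ν ∧ ∃ τ : A → X → HMat ι, IsAssemblage τ ∧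
    IsUnsteerable (fun a x => (1 / (1 + ν)) • σ a x + (ν / (1 + ν)) • τ a x)}

/-- Separability of a bipartite state. -/
def IsSeparable {ιA ιB : Type} [Fintype ιA] [Fintype ιB]
    (ρ : Matrix (ιA × ιB) (ιA × ιB) ℂ) : Prop :=
  ∃ (n : ℕ) (w : Fin n → ℝ) (ρA : Fin n → HMat ιA) (ρB : Fin n → HMat ιB),
    (∀ l, 0 ≤ w l) ∧ (∑ l, w l = 1) ∧ (∀ l, IsDensity (ρA l)) ∧ (∀ l, IsDensity (ρB l)) ∧
    ρ = ∑ l, w l • ((ρA l) ⊗ₖ (ρB l))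

/-- The (unnormalized) output assemblage of a one-way LOCC subchannel acting on an
assemblage: `M(σ)_{a'|x'} = K (∑_{a,x} P(x|x') P(a'|x',a,x) σ_{a|x}) K†`. -/
def wired {ι ι₂ A X A' X' : Type} [Fintype ι] [Fintype A] [Fintype X]
    (K : Matrix ι₂ ι ℂ) (Px : X → X' → ℝ) (Pa : A' → X' → A → X → ℝ)
    (σ : A → X → HMat ι) : A' → X' → HMat ι₂ :=
  fun a' x' => K * (∑ x, ∑ a, (Px x x' * Pa a' x' a x) • σ a x) * Kᴴ

instance matMeasurableSpace {m n : Type} : MeasurableSpace (Matrix m n ℂ) :=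
  inferInstanceAs (MeasurableSpace (m → n → ℂ))

/-- The `(U ⊗ U*)`-twirl of a bipartite state with respect to a measure `μ` on the
unitary group (entrywise Bochner integral). -/
def twirl {ι : Type} [Fintype ι] [DecidableEq ι]
    (μ : Measure (Matrix.unitaryGroup ι ℂ)) (ρ : Matrix (ι × ι) (ι × ι) ℂ) :
    Matrix (ι × ι) (ι × ι) ℂ :=
  Matrix.of fun p q =>
    ∫ V : Matrix.unitaryGroup ι ℂ,
      ((((V : Matrix ι ι ℂ)) ⊗ₖ ((V : Matrix ι ι ℂ).map (starRingEnd ℂ))) * ρ *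
        ((((V : Matrix ι ι ℂ)) ⊗ₖ ((V : Matrix ι ι ℂ).map (starRingEnd ℂ)))ᴴ)) p q ∂μ



-- Auxiliary lemmas

lemma psd_diag_re_nonneg {n : Type} [Fintype n] [DecidableEq n] {M : Matrix n n ℂ}
    (hM : M.PosSemidef) (i : n) : 0 ≤ (M i i).re := by
  have h := hM.diag_nonneg (i := i)
  exact (Complex.nonneg_iff.mp h).1

lemma psd_trace_re_nonneg {n : Type} [Fintype n] [DecidableEq n] {M : Matrix n n ℂ}
    (hM : M.PosSemidef) : 0 ≤ (M.trace).re := by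
  rw [Matrix.trace]
  have : ((∑ i, M.diag i).re) = ∑ i, (M i i).re := by
    simp [Complex.re_sum, Matrix.diag]
  rw [this]
  exact Finset.sum_nonneg fun i _ => psd_diag_re_nonneg hM i

theorem psd_eq_conjTranspose_mul_self' {n : Type} [Fintype n] [DecidableEq n] {M : Matrix n n ℂ}
    (hM : M.PosSemidef) : ∃ B : Matrix n n ℂ, M = Bᴴ * B := by
  open scoped MatrixOrder in
  obtain ⟨B, hB⟩ := CStarAlgebra.nonneg_iff_eq_star_mul_self.mp hM.nonneg
  exact ⟨B, by rw [hB, Matrix.star_eq_conjTranspose]⟩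

lemma trace_mul_psd_re_nonneg {n : Type} [Fintype n] [DecidableEq n] {M N : Matrix n n ℂ}
    (hM : M.PosSemidef) (hN : N.PosSemidef) : 0 ≤ ((M * N).trace).re := by
  obtain ⟨A, hA⟩ := psd_eq_conjTranspose_mul_self' hM
  rw [hA, Matrix.mul_assoc, Matrix.trace_mul_comm]
  exact psd_trace_re_nonneg (hN.mul_mul_conjTranspose_same A)

lemma kron_conjT {m n m' n' : Type} (M : Matrix m n ℂ) (N : Matrix m' n' ℂ) :
    (M ⊗ₖ N)ᴴ = Mᴴ ⊗ₖ Nᴴ := by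
  ext ⟨i, j⟩ ⟨k, l⟩
  simp [Matrix.conjTranspose_apply, mul_comm]

lemma kron_psd {m m' : Type} [Fintype m] [Fintype m'] [DecidableEq m] [DecidableEq m']
    {M : Matrix m m ℂ} {N : Matrix m' m' ℂ} (hM : M.PosSemidef) (hN : N.PosSemidef) :
    (M ⊗ₖ N).PosSemidef := by
  obtain ⟨A, hA⟩ := psd_eq_conjTranspose_mul_self' hM
  obtain ⟨B, hB⟩ := psd_eq_conjTranspose_mul_self' hN
  rw [hA, hB, Matrix.mul_kronecker_mul, ← kron_conjT]
  exact Matrix.posSemidef_conjTranspose_mul_self _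

lemma trace_ptraceA_mul {ιA ιB : Type} [Fintype ιA] [Fintype ιB] [DecidableEq ιB]
    (ρ : Matrix (ιA × ιB) (ιA × ιB) ℂ) (E : Matrix ιA ιA ℂ) (M : Matrix ιB ιB ℂ) :
    (M * ptraceA (ρ * (E ⊗ₖ (1 : Matrix ιB ιB ℂ)))).trace = (ρ * (E ⊗ₖ M)).trace := by
  simp only [Matrix.trace, Matrix.diag, Matrix.mul_apply, ptraceA, Matrix.of_apply,
    Matrix.kroneckerMap_apply, Matrix.one_apply, Fintype.sum_prod_type, mul_ite, mul_one,
    mul_zero, Finset.sum_ite_eq, Finset.sum_ite_eq', Finset.mem_univ, if_true,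
    Finset.mul_sum, Finset.sum_mul]
  conv_lhs => rw [Finset.sum_comm]
  conv_lhs => enter [2, b2]; rw [Finset.sum_comm]
  conv_lhs => enter [2, b2, 2, a1]; rw [Finset.sum_comm]
  conv_lhs => rw [Finset.sum_comm]
  refine Finset.sum_congr rfl fun a1 _ => Finset.sum_congr rfl fun b2 _ =>
    Finset.sum_congr rfl fun a2 _ => Finset.sum_congr rfl fun b1 _ => by ring

lemma inducedF_mul_trace_re {dB : ℕ} {A B X Y : Type} [Fintype B] [Fintype Y]
    (Bf : A → B → X → Y → ℝ) (EB : B → Y → HMat (Fin dB)) (a : A) (x : X)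
    (σax : HMat (Fin dB)) :
    (((inducedF Bf EB) a x * σax).trace).re
      = ∑ y, ∑ b, Bf a b x y * ((EB b y * σax).trace).re := by
  simp only [inducedF, Finset.sum_mul, Matrix.smul_mul, Matrix.trace_sum, Matrix.trace_smul,
    Complex.re_sum]
  refine Finset.sum_congr rfl fun y _ => Finset.sum_congr rfl fun b _ => ?_
  rw [Complex.real_smul, Complex.re_ofReal_mul]

lemma lhv_bellValue_le {A B X Y : Type} [Fintype A] [Fintype B] [Fintype X] [Fintype Y]
    (Bf : A → B → X → Y → ℝ) (hBf : ∀ a b x y, 0 ≤ Bf a b x y)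
    {P : A → B → X → Y → ℝ} (hP : IsLHV P) :
    bellValue Bf P ≤ ∑ x, ∑ y, ∑ a, ∑ b, Bf a b x y := by
  obtain ⟨n, w, pA, pB, hw0, hw1, hA0, hA1, hB0, hB1, hPe⟩ := hP
  have hPle : ∀ a b x y, P a b x y ≤ 1 := by
    intro a b x y
    rw [hPe]
    calc ∑ l, w l * pA a x l * pB b y l ≤ ∑ l, w l := by
          refine Finset.sum_le_sum fun l _ => ?_
          have h1 : pA a x l ≤ 1 := (hA1 x l) ▸
            Finset.single_le_sum (fun a' _ => hA0 a' x l) (Finset.mem_univ a)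
          have h2 : pB b y l ≤ 1 := (hB1 y l) ▸
            Finset.single_le_sum (fun b' _ => hB0 b' y l) (Finset.mem_univ b)
          calc w l * pA a x l * pB b y l ≤ w l * 1 * 1 := by
                apply mul_le_mul (mul_le_mul le_rfl h1 (hA0 a x l) (hw0 l)) h2 (hB0 b y l)
                exact mul_nonneg (hw0 l) zero_le_one
            _ = w l := by ring
      _ = 1 := hw1
  refine Finset.sum_le_sum fun x _ => Finset.sum_le_sum fun y _ =>
    Finset.sum_le_sum fun a _ => Finset.sum_le_sum fun b _ => ?_
  calc Bf a b x y * P a b x y ≤ Bf a b x y * 1 :=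
        mul_le_mul_of_nonneg_left (hPle a b x y) (hBf a b x y)
    _ = Bf a b x y := mul_one _

lemma lhv_set_bddAbove {A B X Y : Type} [Fintype A] [Fintype B] [Fintype X] [Fintype Y]
    (Bf : A → B → X → Y → ℝ) (hBf : ∀ a b x y, 0 ≤ Bf a b x y) :
    BddAbove {r : ℝ | ∃ P : A → B → X → Y → ℝ, IsLHV P ∧ r = bellValue Bf P} := by
  refine ⟨∑ x, ∑ y, ∑ a, ∑ b, Bf a b x y, fun r hr => ?_⟩
  obtain ⟨P, hP, rfl⟩ := hr
  exact lhv_bellValue_le Bf hBf hP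

lemma unsteerable_value_le {dB : ℕ} {A B X Y : Type}
    [Fintype A] [Fintype B] [Fintype X] [Fintype Y]
    (Bf : A → B → X → Y → ℝ) (hBf : ∀ a b x y, 0 ≤ Bf a b x y)
    (EB : B → Y → HMat (Fin dB)) (hEB : IsPOVM EB)
    {σ : A → X → HMat (Fin dB)} (hσ : IsUnsteerable σ) :
    steeringValue (inducedF Bf EB) σ ≤ localBound Bf := by
  obtain ⟨n, w, p, τ, hw0, hw1, hp0, hp1, hτ, hσe⟩ := hσ
  set q : B → Y → Fin n → ℝ := fun b y l => ((EB b y * τ l).trace).re with hq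
  have hq0 : ∀ b y l, 0 ≤ q b y l :=
    fun b y l => trace_mul_psd_re_nonneg (hEB.1 b y) (hτ l).1
  have hq1 : ∀ y l, ∑ b, q b y l = 1 := by
    intro y l
    have : ∑ b, (EB b y * τ l).trace = 1 := by
      rw [← Matrix.trace_sum, ← Finset.sum_mul, hEB.2 y, one_mul, (hτ l).2]
    calc ∑ b, q b y l = (∑ b, (EB b y * τ l).trace).re := by
          simp [hq, Complex.re_sum]
      _ = 1 := by rw [this]; simp
  set P : A → B → X → Y → ℝ := fun a b x y => ∑ l, w l * p a x l * q b y l with hPdef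
  have hP : IsLHV P := ⟨n, w, p, q, hw0, hw1, hp0, hp1, hq0, hq1, fun _ _ _ _ => rfl⟩
  have hval : steeringValue (inducedF Bf EB) σ = bellValue Bf P := by
    unfold steeringValue bellValue
    refine Finset.sum_congr rfl fun x _ => ?_
    rw [Finset.sum_comm]
    refine Finset.sum_congr rfl fun a _ => ?_
    rw [inducedF_mul_trace_re]
    refine Finset.sum_congr rfl fun y _ => Finset.sum_congr rfl fun b _ => ?_
    have : ((EB b y * σ a x).trace).re = P a b x y := by
      rw [hσe a x]
      simp only [Finset.mul_sum, Matrix.mul_smul, Matrix.trace_sum, Matrix.trace_smul,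
        Complex.re_sum, hPdef]
      refine Finset.sum_congr rfl fun l _ => ?_
      rw [Complex.real_smul, Complex.re_ofReal_mul, hq]
    rw [this]
  rw [hval]
  exact le_csSup (lhv_set_bddAbove Bf hBf) ⟨P, hP, rfl⟩

/-- the nonlocality fraction is bounded by the steering fraction of the
induced steering functional: `Γ(P, B) ≤ Γ_s({ρ, E_A}, F_(B;E_B))`. -/
theorem stmt1 {A B X Y : Type} [Fintype A] [Fintype B] [Fintype X] [Fintype Y]
    [Nonempty A] [Nonempty B] [Nonempty X] [Nonempty Y]
    (dA dB : ℕ) (hdA : 0 < dA) (hdB : 0 < dB)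
    (ρ : Matrix (Fin dA × Fin dB) (Fin dA × Fin dB) ℂ) (hρ : IsDensity ρ)
    (EA : A → X → HMat (Fin dA)) (hEA : IsPOVM EA)
    (EB : B → Y → HMat (Fin dB)) (hEB : IsPOVM EB)
    (Bf : A → B → X → Y → ℝ) (hBf : ∀ a b x y, 0 ≤ Bf a b x y)
    (hω : 0 < localBound Bf)
    (hωs : 0 < steeringBound (inducedF Bf EB)) :
    nonlocalityFraction (quantumCorr ρ EA EB) Bf ≤
      steeringFraction (inducedAssemblage ρ EA) (inducedF Bf EB) := by
  classical
  -- steering value of the induced objects equals the Bell value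
  have hVeq : steeringValue (inducedF Bf EB) (inducedAssemblage ρ EA)
      = bellValue Bf (quantumCorr ρ EA EB) := by
    unfold steeringValue bellValue
    refine Finset.sum_congr rfl fun x _ => ?_
    rw [Finset.sum_comm]
    refine Finset.sum_congr rfl fun a _ => ?_
    rw [inducedF_mul_trace_re]
    refine Finset.sum_congr rfl fun y _ => Finset.sum_congr rfl fun b _ => ?_
    unfold inducedAssemblage quantumCorr
    rw [trace_ptraceA_mul]
  -- the Bell value is nonnegative
  have hV0 : 0 ≤ bellValue Bf (quantumCorr ρ EA EB) := by
    refine Finset.sum_nonneg fun x _ => Finset.sum_nonneg fun y _ =>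
      Finset.sum_nonneg fun a _ => Finset.sum_nonneg fun b _ => ?_
    exact mul_nonneg (hBf a b x y)
      (trace_mul_psd_re_nonneg hρ.1 (kron_psd (hEA.1 a x) (hEB.1 b y)))
  -- the steering bound is at most the local bound
  have hle : steeringBound (inducedF Bf EB) ≤ localBound Bf := by
    have hne : {r : ℝ | ∃ σ : A → X → HMat (Fin dB), IsAssemblage σ ∧ IsUnsteerable σ ∧
        r = steeringValue (inducedF Bf EB) σ}.Nonempty := by
      by_contra h
      rw [Set.not_nonempty_iff_eq_empty] at h
      rw [steeringBound, h, Real.sSup_empty] at hωs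
      exact lt_irrefl 0 hωs
    refine csSup_le hne fun r hr => ?_
    obtain ⟨σ, _, hus, rfl⟩ := hr
    exact unsteerable_value_le Bf hBf EB hEB hus
  unfold nonlocalityFraction steeringFraction
  rw [hVeq]
  exact div_le_div_of_nonneg_left hV0 hωs hle

end QSteer

end
end

section
/- For any density matrix ρ on ℂ^d ⊗ ℂ^d, any Alice POVM family E_A = {E_{a|x}} on ℂ^d, and any steering functional F = {F_{a|x}} with F_{a|x} positive semidefinite (and ω_s(F) > 0), there exist a density matrix ρ' on ℂ^d ⊗ ℂ^d and d×d unitaries U and U' such that: (i) F(T(ρ')) = ⟨Ψ_d^+| ρ' |Ψ_d^+⟩ = F(ρ') = F(ρ), and (ii) Γ_s({ρ, Ẽ_A}, F̃) ≥ Γ_s({T(ρ'), E_A}, F), where Ẽ_A = {U† E_{a|x} U}, F̃ = {U'† F_{a|x} U'}, and T(ρ') = ∫_{U(d)} (V ⊗ V*) ρ' (V ⊗ V*)† dV is the (U ⊗ U*)-twirl with respect to the Haar probability measure on the unitary group U(d), V* denoting the entrywise complex conjugate of V. -/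
open scoped ComplexOrder Kronecker Matrix
open MeasureTheory

noncomputable section

namespace QSteer

/-! ### Auxiliary lemmas -/

section Aux

set_option linter.unusedSectionVars false

variable {ι : Type} [Fintype ι] [DecidableEq ι]

/-- Conjugate of a matrix. -/
abbrev mconj (V : Matrix ι ι ℂ) : Matrix ι ι ℂ := V.map (starRingEnd ℂ)

/-- `V ⊗ V̄`. -/
abbrev kconj (V : Matrix ι ι ℂ) : Matrix (ι × ι) (ι × ι) ℂ := V ⊗ₖ mconj V

lemma kron_conjTranspose (A B : Matrix ι ι ℂ) : (A ⊗ₖ B)ᴴ = Aᴴ ⊗ₖ Bᴴ := by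
  ext p q
  simp [Matrix.conjTranspose_apply, Matrix.kroneckerMap_apply, map_mul, mul_comm]

lemma maxEnt_conjTranspose : (maxEnt ι)ᴴ = maxEnt ι := by
  ext p q
  simp only [Matrix.conjTranspose_apply, maxEnt, Matrix.of_apply, and_comm]
  split <;> simp

lemma maxEnt_mul_kconj {V : Matrix ι ι ℂ} (hV : V ∈ Matrix.unitaryGroup ι ℂ) :
    maxEnt ι * kconj V = maxEnt ι := by
  have hV' : ∀ q2 q1 : ι, (∑ r, (starRingEnd ℂ) (V r q2) * V r q1)
      = if q2 = q1 then 1 else 0 := by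
    intro q2 q1
    have h : (star V * V) q2 q1 = (1 : Matrix ι ι ℂ) q2 q1 := by rw [hV.1]
    simpa [Matrix.mul_apply, Matrix.star_apply, Matrix.conjTranspose_apply,
      Matrix.one_apply] using h
  ext p q
  obtain ⟨p1, p2⟩ := p; obtain ⟨q1, q2⟩ := q
  simp only [Matrix.mul_apply, maxEnt, Matrix.of_apply, Matrix.kroneckerMap_apply,
    Fintype.sum_prod_type, Matrix.map_apply]
  by_cases hp : p1 = p2
  · simp only [hp, true_and, if_true, ite_mul, zero_mul]
    simp only [Finset.sum_ite_eq, Finset.mem_univ, if_true]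
    have : ∀ y : ι, (Fintype.card ι : ℂ)⁻¹ * (V y q1 * (starRingEnd ℂ) (V y q2))
        = (Fintype.card ι : ℂ)⁻¹ * ((starRingEnd ℂ) (V y q2) * V y q1) := by
      intro y; ring
    rw [Finset.sum_congr rfl (fun y _ => this y), ← Finset.mul_sum, hV' q2 q1]
    by_cases hq : q1 = q2
    · simp [hq]
    · rw [if_neg (Ne.symm hq), if_neg hq, mul_zero]
  · simp [hp]

lemma kconj_conjT_mul_maxEnt {V : Matrix ι ι ℂ} (hV : V ∈ Matrix.unitaryGroup ι ℂ) :
    (kconj V)ᴴ * maxEnt ι = maxEnt ι := by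
  have := congrArg Matrix.conjTranspose (maxEnt_mul_kconj hV)
  rwa [Matrix.conjTranspose_mul, maxEnt_conjTranspose] at this

lemma trace_maxEnt_conj {V : Matrix ι ι ℂ} (hV : V ∈ Matrix.unitaryGroup ι ℂ)
    (X : Matrix (ι × ι) (ι × ι) ℂ) :
    (maxEnt ι * (kconj V * X * (kconj V)ᴴ)).trace = (maxEnt ι * X).trace := by
  calc (maxEnt ι * (kconj V * X * (kconj V)ᴴ)).trace
      = ((maxEnt ι * kconj V) * X * (kconj V)ᴴ).trace := by simp only [← mul_assoc]
    _ = (maxEnt ι * X * (kconj V)ᴴ).trace := by rw [maxEnt_mul_kconj hV]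
    _ = ((kconj V)ᴴ * (maxEnt ι) * X).trace := by
        rw [Matrix.trace_mul_cycle]
    _ = (maxEnt ι * X).trace := by rw [kconj_conjT_mul_maxEnt hV]


lemma sum_rot (g : ι → ι → ι → ℂ) :
    ∑ a, ∑ b, ∑ c, g a b c = ∑ c, ∑ b, ∑ a, g a b c := by
  rw [Finset.sum_comm]
  rw [show (∑ b : ι, ∑ a : ι, ∑ c : ι, g a b c) = ∑ b : ι, ∑ c : ι, ∑ a : ι, g a b c from
    Finset.sum_congr rfl fun b _ => Finset.sum_comm]
  exact Finset.sum_comm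

lemma trace_ptraceA (F : HMat ι) (N : Matrix (ι × ι) (ι × ι) ℂ) :
    (F * ptraceA N).trace = (N * ((1 : HMat ι) ⊗ₖ F)).trace := by
  simp only [Matrix.trace, Matrix.diag, Matrix.mul_apply, ptraceA, Matrix.of_apply,
    Matrix.kroneckerMap_apply, Fintype.sum_prod_type, Matrix.one_apply,
    ite_mul, one_mul, zero_mul, mul_ite, mul_zero, mul_one,
    Finset.mul_sum, Finset.sum_ite_irrel, Finset.sum_const_zero, Finset.sum_ite_eq,
    Finset.sum_ite_eq', Finset.mem_univ, if_true]
  rw [sum_rot (fun a b c => F a b * N (c, b) (c, a))]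
  exact Finset.sum_congr rfl fun c _ => Finset.sum_congr rfl fun b _ =>
    Finset.sum_congr rfl fun a _ => by ring

lemma trace_F_ptraceA (F E : HMat ι) (M : Matrix (ι × ι) (ι × ι) ℂ) :
    (F * ptraceA (M * (E ⊗ₖ (1 : HMat ι)))).trace = (M * (E ⊗ₖ F)).trace := by
  rw [trace_ptraceA, mul_assoc, ← Matrix.mul_kronecker_mul, mul_one, one_mul]

instance matBorel {m n : Type} [Countable m] [Countable n] : BorelSpace (Matrix m n ℂ) :=
  inferInstanceAs (BorelSpace (m → n → ℂ))

instance ugBorel : BorelSpace (Matrix.unitaryGroup ι ℂ) :=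
  inferInstanceAs (BorelSpace ((Matrix.unitaryGroup ι ℂ : Set (Matrix ι ι ℂ)) : Type))

lemma ug_isCompact : IsCompact (Matrix.unitaryGroup ι ℂ : Set (Matrix ι ι ℂ)) := by
  have hclosed : IsClosed (Matrix.unitaryGroup ι ℂ : Set (Matrix ι ι ℂ)) := by
    have heq : (Matrix.unitaryGroup ι ℂ : Set (Matrix ι ι ℂ)) =
        (fun U : Matrix ι ι ℂ => (star U * U, U * star U)) ⁻¹' {(1, 1)} := by
      ext U
      simp only [Set.mem_preimage, Set.mem_singleton_iff, Prod.mk.injEq]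
      exact ⟨fun h => ⟨h.1, h.2⟩, fun h => ⟨h.1, h.2⟩⟩
    rw [heq]
    have hc : Continuous fun U : Matrix ι ι ℂ => (star U * U, U * star U) := by
      have h1 : Continuous fun U : Matrix ι ι ℂ => U := continuous_id
      have h2 : Continuous fun U : Matrix ι ι ℂ => star U := by
        simpa [Matrix.star_eq_conjTranspose] using h1.matrix_conjTranspose
      exact (h2.matrix_mul h1).prodMk (h1.matrix_mul h2)
    exact IsClosed.preimage hc isClosed_singleton
  have hsub : (Matrix.unitaryGroup ι ℂ : Set (Matrix ι ι ℂ)) ⊆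
      Set.pi Set.univ (fun _ : ι => Set.pi Set.univ
        (fun _ : ι => Metric.closedBall (0 : ℂ) 1)) := by
    intro U hU i _ j _
    have hU' : star U * U = 1 := hU.1
    simp only [Metric.mem_closedBall, dist_zero_right]
    have h1 : ((star U * U) j j) = 1 := by rw [hU']; simp
    rw [Matrix.mul_apply] at h1
    have h2 : (∑ k, Complex.normSq (U k j) : ℝ) = 1 := by
      have := congrArg Complex.re h1
      simpa [Matrix.star_apply, Matrix.conjTranspose_apply, Complex.mul_conj', Complex.normSq_apply] using this
    have h3 : Complex.normSq (U i j) ≤ 1 := by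
      rw [← h2]
      exact Finset.single_le_sum (f := fun k => Complex.normSq (U k j))
        (fun k _ => Complex.normSq_nonneg _) (Finset.mem_univ i)
    have h4 : ‖U i j‖ ^ 2 ≤ 1 := by rwa [← Complex.sq_norm] at h3
    nlinarith [norm_nonneg (U i j)]
  exact IsCompact.of_isClosed_subset
    (isCompact_univ_pi fun _ => isCompact_univ_pi fun _ => isCompact_closedBall 0 1)
    hclosed hsub

instance ugCompact : CompactSpace (Matrix.unitaryGroup ι ℂ) :=
  isCompact_iff_compactSpace.mp ug_isCompact

instance ugNonempty : Nonempty (Matrix.unitaryGroup ι ℂ) := ⟨1⟩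

lemma cont_integrable {E' : Type*} [NormedAddCommGroup E']
    {μ : Measure (Matrix.unitaryGroup ι ℂ)} [IsFiniteMeasure μ]
    {f : Matrix.unitaryGroup ι ℂ → E'} (hf : Continuous f) :
    Integrable f μ :=
  hf.integrable_of_hasCompactSupport
    (IsCompact.of_isClosed_subset isCompact_univ (isClosed_tsupport _) (Set.subset_univ _))

lemma cont_coe : Continuous fun V : Matrix.unitaryGroup ι ℂ => (V : Matrix ι ι ℂ) :=
  continuous_subtype_val

lemma cont_mconj : Continuous fun V : Matrix.unitaryGroup ι ℂ => mconj (V : Matrix ι ι ℂ) :=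
  continuous_matrix fun i j =>
    (Complex.continuous_conj).comp ((cont_coe.matrix_elem i j))

lemma cont_kconj : Continuous fun V : Matrix.unitaryGroup ι ℂ => kconj (V : Matrix ι ι ℂ) :=
  continuous_matrix fun p q =>
    ((cont_coe.matrix_elem p.1 q.1).mul (cont_mconj.matrix_elem p.2 q.2))

lemma cont_conjd (ρ' : Matrix (ι × ι) (ι × ι) ℂ) :
    Continuous fun V : Matrix.unitaryGroup ι ℂ =>
      kconj (V : Matrix ι ι ℂ) * ρ' * (kconj (V : Matrix ι ι ℂ))ᴴ :=
  (cont_kconj.matrix_mul continuous_const).matrix_mul cont_kconj.matrix_conjTranspose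

lemma trace_twirl_mul (μ : Measure (Matrix.unitaryGroup ι ℂ)) [IsProbabilityMeasure μ]
    (ρ' G : Matrix (ι × ι) (ι × ι) ℂ) :
    ((twirl μ ρ') * G).trace
      = ∫ V : Matrix.unitaryGroup ι ℂ,
          ((kconj (V : Matrix ι ι ℂ) * ρ' * (kconj (V : Matrix ι ι ℂ))ᴴ) * G).trace ∂μ := by
  have hint : ∀ p q : ι × ι, Integrable (fun V : Matrix.unitaryGroup ι ℂ =>
      ((kconj (V : Matrix ι ι ℂ) * ρ' * (kconj (V : Matrix ι ι ℂ))ᴴ) p q) * G q p) μ :=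
    fun p q => cont_integrable (((cont_conjd ρ').matrix_elem p q).mul continuous_const)
  have step1 : ∀ x : ι × ι,
      (∑ q, (∫ V : Matrix.unitaryGroup ι ℂ,
          ((kconj (V : Matrix ι ι ℂ) * ρ' * (kconj (V : Matrix ι ι ℂ))ᴴ) x q) ∂μ) * G q x)
      = ∫ V : Matrix.unitaryGroup ι ℂ,
          ∑ q, ((kconj (V : Matrix ι ι ℂ) * ρ' * (kconj (V : Matrix ι ι ℂ))ᴴ) x q) * G q x ∂μ := by
    intro x
    rw [integral_finset_sum _ (fun q _ => hint x q)]
    exact Finset.sum_congr rfl fun q _ => (integral_mul_const _ _).symm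
  calc ((twirl μ ρ') * G).trace
      = ∑ x : ι × ι, ∑ q : ι × ι, (∫ V : Matrix.unitaryGroup ι ℂ,
          ((kconj (V : Matrix ι ι ℂ) * ρ' * (kconj (V : Matrix ι ι ℂ))ᴴ) x q) ∂μ) * G q x := by
        simp only [Matrix.trace, Matrix.diag, Matrix.mul_apply, twirl, Matrix.of_apply]
    _ = ∑ x : ι × ι, ∫ V : Matrix.unitaryGroup ι ℂ,
          ∑ q, ((kconj (V : Matrix ι ι ℂ) * ρ' * (kconj (V : Matrix ι ι ℂ))ᴴ) x q) * G q x ∂μ :=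
        Finset.sum_congr rfl fun x _ => step1 x
    _ = ∫ V : Matrix.unitaryGroup ι ℂ, ∑ x : ι × ι,
          ∑ q, ((kconj (V : Matrix ι ι ℂ) * ρ' * (kconj (V : Matrix ι ι ℂ))ᴴ) x q) * G q x ∂μ := by
        rw [integral_finset_sum]
        intro x _
        apply cont_integrable
        exact continuous_finset_sum _ fun q _ =>
          ((cont_conjd ρ').matrix_elem x q).mul continuous_const
    _ = ∫ V : Matrix.unitaryGroup ι ℂ,
          ((kconj (V : Matrix ι ι ℂ) * ρ' * (kconj (V : Matrix ι ι ℂ))ᴴ) * G).trace ∂μ := by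
        congr 1


lemma mconj_conjTranspose (V : Matrix ι ι ℂ) : (mconj V)ᴴ = Vᵀ := by
  ext p q
  simp [Matrix.conjTranspose_apply, Matrix.map_apply, Matrix.transpose_apply]

lemma mconj_mem {V : Matrix ι ι ℂ} (hV : V ∈ Matrix.unitaryGroup ι ℂ) :
    mconj V ∈ Matrix.unitaryGroup ι ℂ := by
  rw [Matrix.mem_unitaryGroup_iff]
  have h2 : V * star V = 1 := hV.2
  ext p q
  have h3 : ∑ x, V p x * (starRingEnd ℂ) (V q x) = (1 : Matrix ι ι ℂ) p q := by
    have := congrArg (fun M : Matrix ι ι ℂ => M p q) h2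
    simpa [Matrix.mul_apply, Matrix.star_eq_conjTranspose,
      Matrix.conjTranspose_apply] using this
  have : ∑ x, mconj V p x * star (mconj V q x)
      = (starRingEnd ℂ) (∑ x, V p x * (starRingEnd ℂ) (V q x)) := by
    simp [Matrix.map_apply, map_sum, map_mul, mul_comm]
  rw [Matrix.mul_apply, Matrix.star_eq_conjTranspose]
  simp only [Matrix.conjTranspose_apply, Matrix.map_apply]
  calc ∑ x, (starRingEnd ℂ) (V p x) * (starRingEnd ℂ) ((starRingEnd ℂ) (V q x))
      = (starRingEnd ℂ) (∑ x, V p x * (starRingEnd ℂ) (V q x)) := by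
        simp [map_sum, map_mul, mul_comm]
    _ = (starRingEnd ℂ) ((1 : Matrix ι ι ℂ) p q) := by rw [h3]
    _ = (1 : Matrix ι ι ℂ) p q := by
        by_cases h : p = q <;> simp [Matrix.one_apply, h]

lemma trace_sandwich {n : Type} [Fintype n] (K X G : Matrix n n ℂ) :
    ((K * X * Kᴴ) * G).trace = (X * (Kᴴ * G * K)).trace := by
  simp only [mul_assoc]
  rw [Matrix.trace_mul_comm]
  simp only [mul_assoc]

/-- `(W ⊗ 1) ρ (W ⊗ 1)ᴴ`. -/
abbrev gmat (W : Matrix ι ι ℂ) (ρ : Matrix (ι × ι) (ι × ι) ℂ) : Matrix (ι × ι) (ι × ι) ℂ :=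
  (W ⊗ₖ (1 : HMat ι)) * ρ * (W ⊗ₖ (1 : HMat ι))ᴴ

lemma gmat_comp (U W : Matrix ι ι ℂ) (ρ : Matrix (ι × ι) (ι × ι) ℂ) :
    gmat U (gmat W ρ) = gmat (U * W) ρ := by
  have h : (U ⊗ₖ (1 : HMat ι)) * (W ⊗ₖ (1 : HMat ι)) = (U * W) ⊗ₖ (1 : HMat ι) := by
    rw [← Matrix.mul_kronecker_mul, one_mul]
  have h' : (W ⊗ₖ (1 : HMat ι))ᴴ * (U ⊗ₖ (1 : HMat ι))ᴴ = ((U * W) ⊗ₖ (1 : HMat ι))ᴴ := by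
    rw [← Matrix.conjTranspose_mul, h]
  calc (U ⊗ₖ (1:HMat ι)) * ((W ⊗ₖ (1:HMat ι)) * ρ * (W ⊗ₖ (1:HMat ι))ᴴ) * (U ⊗ₖ (1:HMat ι))ᴴ
      = ((U ⊗ₖ (1:HMat ι)) * (W ⊗ₖ (1:HMat ι))) * ρ *
        ((W ⊗ₖ (1:HMat ι))ᴴ * (U ⊗ₖ (1:HMat ι))ᴴ) := by
        simp only [← mul_assoc]
    _ = ((U * W) ⊗ₖ (1:HMat ι)) * ρ * ((U * W) ⊗ₖ (1:HMat ι))ᴴ := by rw [h, h']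

/-- The fef objective as a function on the unitary group. -/
def fefVal (ρ : Matrix (ι × ι) (ι × ι) ℂ) (V : Matrix.unitaryGroup ι ℂ) : ℝ :=
  ((maxEnt ι * gmat (V : Matrix ι ι ℂ) ρ).trace).re

def fefSet (ρ : Matrix (ι × ι) (ι × ι) ℂ) : Set ℝ :=
  {r | ∃ U, U ∈ Matrix.unitaryGroup ι ℂ ∧ r = ((maxEnt ι * gmat U ρ).trace).re}

lemma fef_eq_sSup (ρ : Matrix (ι × ι) (ι × ι) ℂ) : fef ρ = sSup (fefSet ρ) := rfl

lemma fefVal_mem (ρ : Matrix (ι × ι) (ι × ι) ℂ) (V : Matrix.unitaryGroup ι ℂ) :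
    fefVal ρ V ∈ fefSet ρ := ⟨V, V.2, rfl⟩

lemma cont_fefVal (ρ : Matrix (ι × ι) (ι × ι) ℂ) : Continuous (fefVal ρ) := by
  apply Complex.continuous_re.comp
  apply Continuous.matrix_trace
  apply Continuous.matrix_mul continuous_const
  have hk : Continuous fun V : Matrix.unitaryGroup ι ℂ =>
      (V : Matrix ι ι ℂ) ⊗ₖ (1 : HMat ι) :=
    continuous_matrix fun p q => (cont_coe.matrix_elem p.1 q.1).mul continuous_const
  exact (hk.matrix_mul continuous_const).matrix_mul hk.matrix_conjTranspose

lemma fefSet_rot {U₀ : Matrix ι ι ℂ} (hU₀ : U₀ ∈ Matrix.unitaryGroup ι ℂ)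
    (ρ : Matrix (ι × ι) (ι × ι) ℂ) : fefSet (gmat U₀ ρ) = fefSet ρ := by
  ext r
  constructor
  · rintro ⟨U, hU, rfl⟩
    exact ⟨U * U₀, mul_mem hU hU₀, by rw [gmat_comp]⟩
  · rintro ⟨W, hW, rfl⟩
    refine ⟨W * U₀ᴴ, mul_mem hW ?_, ?_⟩
    · rw [← Matrix.star_eq_conjTranspose]
      exact Unitary.star_mem hU₀
    · rw [gmat_comp, mul_assoc, ← Matrix.star_eq_conjTranspose, hU₀.1, mul_one]

lemma conj_kron_sandwich (V : Matrix ι ι ℂ) (P Q : HMat ι) :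
    (kconj V)ᴴ * (P ⊗ₖ Q) * (kconj V)
      = (Vᴴ * P * V) ⊗ₖ ((mconj V)ᴴ * Q * (mconj V)) := by
  rw [kron_conjTranspose, ← Matrix.mul_kronecker_mul, ← Matrix.mul_kronecker_mul]

lemma steer_pointwise (V U₀ : Matrix ι ι ℂ) (P Q : HMat ι)
    (ρ : Matrix (ι × ι) (ι × ι) ℂ) :
    ((kconj V * gmat U₀ ρ * (kconj V)ᴴ) * (P ⊗ₖ Q)).trace
      = (ρ * ((((V * U₀)ᴴ) * P * (V * U₀)) ⊗ₖ ((mconj V)ᴴ * Q * (mconj V)))).trace := by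
  rw [trace_sandwich, conj_kron_sandwich, trace_sandwich]
  congr 2
  rw [kron_conjTranspose, Matrix.conjTranspose_one, ← Matrix.mul_kronecker_mul,
    ← Matrix.mul_kronecker_mul, one_mul, mul_one, Matrix.conjTranspose_mul]
  congr 1
  simp only [mul_assoc]

lemma fef_pointwise {V : Matrix ι ι ℂ} (hV : V ∈ Matrix.unitaryGroup ι ℂ)
    (U : Matrix ι ι ℂ) (ρ' : Matrix (ι × ι) (ι × ι) ℂ) :
    (maxEnt ι * gmat U (kconj V * ρ' * (kconj V)ᴴ)).trace
      = (maxEnt ι * gmat (Vᴴ * U * V) ρ').trace := by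
  set W := Vᴴ * U * V with hW
  have hVV : V * Vᴴ = 1 := by rw [← Matrix.star_eq_conjTranspose]; exact hV.2
  have h1 : (U ⊗ₖ (1 : HMat ι)) * kconj V = kconj V * (W ⊗ₖ (1 : HMat ι)) := by
    have hUV : V * (Vᴴ * U * V) = U * V := by
      calc V * (Vᴴ * U * V) = (V * Vᴴ) * (U * V) := by simp only [mul_assoc]
        _ = U * V := by rw [hVV, one_mul]
    rw [← Matrix.mul_kronecker_mul, ← Matrix.mul_kronecker_mul, one_mul, mul_one, hW, hUV]
  have h2 : (kconj V)ᴴ * (U ⊗ₖ (1 : HMat ι))ᴴ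
      = (W ⊗ₖ (1 : HMat ι))ᴴ * (kconj V)ᴴ := by
    rw [← Matrix.conjTranspose_mul, ← Matrix.conjTranspose_mul, h1]
  have h3 : gmat U (kconj V * ρ' * (kconj V)ᴴ)
      = kconj V * gmat W ρ' * (kconj V)ᴴ := by
    calc (U ⊗ₖ (1:HMat ι)) * (kconj V * ρ' * (kconj V)ᴴ) * (U ⊗ₖ (1:HMat ι))ᴴ
        = ((U ⊗ₖ (1:HMat ι)) * kconj V) * ρ' * ((kconj V)ᴴ * (U ⊗ₖ (1:HMat ι))ᴴ) := by
          simp only [mul_assoc]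
      _ = (kconj V * (W ⊗ₖ (1:HMat ι))) * ρ' * ((W ⊗ₖ (1:HMat ι))ᴴ * (kconj V)ᴴ) := by
          rw [h1, h2]
      _ = kconj V * gmat W ρ' * (kconj V)ᴴ := by simp only [mul_assoc, gmat]
  rw [h3, trace_maxEnt_conj hV]

lemma re_trace_twirl_mul (μ : Measure (Matrix.unitaryGroup ι ℂ)) [IsProbabilityMeasure μ]
    (ρ' G : Matrix (ι × ι) (ι × ι) ℂ) :
    (((twirl μ ρ') * G).trace).re
      = ∫ V : Matrix.unitaryGroup ι ℂ,
          (((kconj (V : Matrix ι ι ℂ) * ρ' * (kconj (V : Matrix ι ι ℂ))ᴴ) * G).trace).re ∂μ := by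
  rw [trace_twirl_mul]
  have hint : Integrable (fun V : Matrix.unitaryGroup ι ℂ =>
      ((kconj (V : Matrix ι ι ℂ) * ρ' * (kconj (V : Matrix ι ι ℂ))ᴴ) * G).trace) μ :=
    cont_integrable (((cont_conjd ρ').matrix_mul continuous_const).matrix_trace)
  have h := integral_re (μ := μ) hint
  simpa [RCLike.re_to_complex] using h.symm

lemma cont_re_trace (H : Matrix (ι × ι) (ι × ι) ℂ)
    (g : Matrix.unitaryGroup ι ℂ → Matrix (ι × ι) (ι × ι) ℂ) (hg : Continuous g) :
    Continuous fun V => (((g V) * H).trace).re :=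
  Complex.continuous_re.comp ((hg.matrix_mul continuous_const).matrix_trace)

section Steer

variable {A X : Type} [Fintype A] [Fintype X]

lemma sum_conj (G : Matrix ι ι ℂ) (f : A → HMat ι) :
    (∑ a, G * f a * Gᴴ) = G * (∑ a, f a) * Gᴴ := by
  rw [Finset.mul_sum, Finset.sum_mul]

lemma isDensity_conj {G : Matrix ι ι ℂ} (hG : G ∈ Matrix.unitaryGroup ι ℂ)
    {τ : HMat ι} (hτ : IsDensity τ) : IsDensity (G * τ * Gᴴ) := by
  refine ⟨hτ.1.mul_mul_conjTranspose_same G, ?_⟩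
  rw [Matrix.trace_mul_cycle, ← Matrix.star_eq_conjTranspose, hG.1, one_mul, hτ.2]

lemma isAssemblage_conj {G : Matrix ι ι ℂ} (hG : G ∈ Matrix.unitaryGroup ι ℂ)
    {σ : A → X → HMat ι} (hσ : IsAssemblage σ) :
    IsAssemblage (fun a x => G * σ a x * Gᴴ) := by
  obtain ⟨h1, h2, h3⟩ := hσ
  refine ⟨fun a x => (h1 a x).mul_mul_conjTranspose_same G, fun x x' => ?_, fun x => ?_⟩
  · rw [sum_conj, sum_conj, h2 x x']
  · rw [sum_conj, Matrix.trace_mul_cycle, ← Matrix.star_eq_conjTranspose, hG.1, one_mul,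
      h3 x]

lemma isUnsteerable_conj {G : Matrix ι ι ℂ} (hG : G ∈ Matrix.unitaryGroup ι ℂ)
    {σ : A → X → HMat ι} (hσ : IsUnsteerable σ) :
    IsUnsteerable (fun a x => G * σ a x * Gᴴ) := by
  obtain ⟨n, w, p, τ, hw, hw1, hp, hp1, hτ, hmod⟩ := hσ
  refine ⟨n, w, p, fun l => G * τ l * Gᴴ, hw, hw1, hp, hp1,
    fun l => isDensity_conj hG (hτ l), fun a x => ?_⟩
  show G * σ a x * Gᴴ = _
  rw [hmod a x, Finset.mul_sum, Finset.sum_mul]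
  exact Finset.sum_congr rfl fun l _ => by
    rw [mul_smul_comm, smul_mul_assoc]

lemma steeringValue_conj (G : Matrix ι ι ℂ) (F σ : A → X → HMat ι) :
    steeringValue (fun a x => Gᴴ * F a x * G) σ
      = steeringValue F (fun a x => G * σ a x * Gᴴ) := by
  refine Finset.sum_congr rfl fun x _ => Finset.sum_congr rfl fun a _ => ?_
  congr 1
  rw [show Gᴴ * F a x * G * σ a x = Gᴴ * (F a x * (G * σ a x)) by simp only [mul_assoc],
    Matrix.trace_mul_comm]
  simp only [mul_assoc]

lemma steeringBound_conj {G : Matrix ι ι ℂ} (hG : G ∈ Matrix.unitaryGroup ι ℂ)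
    (F : A → X → HMat ι) :
    steeringBound (fun a x => Gᴴ * F a x * G) = steeringBound F := by
  have hG' : Gᴴ ∈ Matrix.unitaryGroup ι ℂ := by
    rw [← Matrix.star_eq_conjTranspose]; exact Unitary.star_mem hG
  unfold steeringBound
  congr 1
  ext r
  constructor
  · rintro ⟨σ, hσ1, hσ2, rfl⟩
    exact ⟨fun a x => G * σ a x * Gᴴ, isAssemblage_conj hG hσ1, isUnsteerable_conj hG hσ2,
      steeringValue_conj G F σ⟩
  · rintro ⟨σ, hσ1, hσ2, rfl⟩
    refine ⟨fun a x => Gᴴ * σ a x * G, ?_, ?_, ?_⟩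
    · simpa [Matrix.conjTranspose_conjTranspose] using isAssemblage_conj hG' hσ1
    · simpa [Matrix.conjTranspose_conjTranspose] using isUnsteerable_conj hG' hσ2
    · rw [steeringValue_conj G F (fun a x => Gᴴ * σ a x * G)]
      refine Finset.sum_congr rfl fun x _ => Finset.sum_congr rfl fun a _ => ?_
      have key : G * (Gᴴ * σ a x * G) * Gᴴ = σ a x := by
        calc G * (Gᴴ * σ a x * G) * Gᴴ
            = (G * Gᴴ) * σ a x * (G * Gᴴ) := by simp only [mul_assoc]
          _ = σ a x := by
              rw [← Matrix.star_eq_conjTranspose, hG.2, one_mul, mul_one]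
      simp only [key]

end Steer

end Aux

/-- Lemma 1: for any state `ρ`, Alice POVMs `E` and positive semidefinite
steering functional `F` on `ℂ^d ⊗ ℂ^d`, there are a state `ρ'` and unitaries `U`, `U'`
such that the fully entangled fraction is preserved through twirling and
`Γ_s({ρ, Ẽ_A}, F̃) ≥ Γ_s({T(ρ'), E_A}, F)`.  The twirl is taken with respect to the Haar
probability measure on the unitary group, characterized as a left-invariant Borel
probability measure `μ`. -/
theorem stmt2 {A X : Type} [Fintype A] [Fintype X] [Nonempty A] [Nonempty X]
    (d : ℕ) (hd : 0 < d)
    (ρ : Matrix (Fin d × Fin d) (Fin d × Fin d) ℂ) (hρ : IsDensity ρ)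
    (E : A → X → HMat (Fin d)) (hE : IsPOVM E)
    (F : A → X → HMat (Fin d)) (hF : IsSteeringFunctional F)
    (hωs : 0 < steeringBound F)
    (μ : Measure (Matrix.unitaryGroup (Fin d) ℂ)) [IsProbabilityMeasure μ]
    [μ.IsMulLeftInvariant] :
    ∃ (ρ' : Matrix (Fin d × Fin d) (Fin d × Fin d) ℂ)
      (U U' : Matrix (Fin d) (Fin d) ℂ),
      IsDensity ρ' ∧
      U ∈ Matrix.unitaryGroup (Fin d) ℂ ∧ U' ∈ Matrix.unitaryGroup (Fin d) ℂ ∧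
      fef (twirl μ ρ') = ((maxEnt (Fin d) * ρ').trace).re ∧
      ((maxEnt (Fin d) * ρ').trace).re = fef ρ' ∧
      fef ρ' = fef ρ ∧
      steeringFraction
          (inducedAssemblage ρ (fun a x => Uᴴ * E a x * U))
          (fun a x => U'ᴴ * F a x * U') ≥
        steeringFraction (inducedAssemblage (twirl μ ρ') E) F := by
  classical
  -- maximizer for the fef of ρ
  obtain ⟨V₀, -, hmax'⟩ :=
    isCompact_univ.exists_isMaxOn Set.univ_nonempty (cont_fefVal ρ).continuousOn
  have hmax : ∀ W : Matrix.unitaryGroup (Fin d) ℂ, fefVal ρ W ≤ fefVal ρ V₀ :=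
    fun W => hmax' (Set.mem_univ W)
  set U₀ : Matrix (Fin d) (Fin d) ℂ := (V₀ : Matrix (Fin d) (Fin d) ℂ) with hU₀def
  have hU₀ : U₀ ∈ Matrix.unitaryGroup (Fin d) ℂ := V₀.2
  set ρ2 : Matrix (Fin d × Fin d) (Fin d × Fin d) ℂ := gmat U₀ ρ with hρ2def
  have hboundρ : ∀ r ∈ fefSet ρ, r ≤ fefVal ρ V₀ := by
    rintro r ⟨U, hU, rfl⟩; exact hmax ⟨U, hU⟩
  have hbdd : BddAbove (fefSet ρ) := ⟨fefVal ρ V₀, hboundρ⟩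
  have hfef_ρ : fef ρ = fefVal ρ V₀ := by
    rw [fef_eq_sSup]
    exact le_antisymm (csSup_le ⟨fefVal ρ V₀, fefVal_mem ρ V₀⟩ hboundρ)
      (le_csSup hbdd (fefVal_mem ρ V₀))
  have hsetρ2 : fefSet ρ2 = fefSet ρ := fefSet_rot hU₀ ρ
  have hfef_ρ2 : fef ρ2 = fef ρ := by rw [fef_eq_sSup, fef_eq_sSup, hsetρ2]
  have hover : ((maxEnt (Fin d) * ρ2).trace).re = fefVal ρ V₀ := rfl
  have hoverall : ((maxEnt (Fin d) * ρ2).trace).re = fef ρ2 := by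
    rw [hfef_ρ2, hfef_ρ, hover]
  -- twirl overlap
  have htw_ov : ((maxEnt (Fin d) * twirl μ ρ2).trace).re
      = ((maxEnt (Fin d) * ρ2).trace).re := by
    rw [Matrix.trace_mul_comm, re_trace_twirl_mul μ ρ2 (maxEnt (Fin d))]
    have hpt : ∀ V : Matrix.unitaryGroup (Fin d) ℂ,
        (((kconj (V : Matrix (Fin d) (Fin d) ℂ) * ρ2 *
          (kconj (V : Matrix (Fin d) (Fin d) ℂ))ᴴ) * maxEnt (Fin d)).trace).re
        = ((maxEnt (Fin d) * ρ2).trace).re := by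
      intro V
      rw [Matrix.trace_mul_comm, trace_maxEnt_conj V.2]
    rw [show (fun V : Matrix.unitaryGroup (Fin d) ℂ =>
        (((kconj (V : Matrix (Fin d) (Fin d) ℂ) * ρ2 *
          (kconj (V : Matrix (Fin d) (Fin d) ℂ))ᴴ) * maxEnt (Fin d)).trace).re)
        = fun _ => ((maxEnt (Fin d) * ρ2).trace).re from funext hpt]
    simp [measure_univ]
  have hone_mem : (1 : Matrix (Fin d) (Fin d) ℂ) ∈ Matrix.unitaryGroup (Fin d) ℂ :=
    Submonoid.one_mem _
  have hgmat_one : ∀ M : Matrix (Fin d × Fin d) (Fin d × Fin d) ℂ, gmat 1 M = M := by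
    intro M
    rw [gmat, Matrix.one_kronecker_one, one_mul, Matrix.conjTranspose_one, mul_one]
  -- fef of the twirl
  have htw_mem : ((maxEnt (Fin d) * twirl μ ρ2).trace).re ∈ fefSet (twirl μ ρ2) :=
    ⟨1, hone_mem, by rw [hgmat_one]⟩
  have htw_le : ∀ r ∈ fefSet (twirl μ ρ2), r ≤ fefVal ρ V₀ := by
    rintro r ⟨U, hU, rfl⟩
    have h1 : (maxEnt (Fin d) * gmat U (twirl μ ρ2)).trace
        = ((twirl μ ρ2) * ((U ⊗ₖ (1 : HMat (Fin d)))ᴴ * maxEnt (Fin d) *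
            (U ⊗ₖ (1 : HMat (Fin d))))).trace := by
      rw [Matrix.trace_mul_comm, trace_sandwich]
    rw [show ((maxEnt (Fin d) * gmat U (twirl μ ρ2)).trace).re
        = (((twirl μ ρ2) * ((U ⊗ₖ (1 : HMat (Fin d)))ᴴ * maxEnt (Fin d) *
            (U ⊗ₖ (1 : HMat (Fin d))))).trace).re from congrArg Complex.re h1]
    rw [re_trace_twirl_mul]
    have hptle : ∀ V : Matrix.unitaryGroup (Fin d) ℂ,
        (((kconj (V : Matrix (Fin d) (Fin d) ℂ) * ρ2 *
          (kconj (V : Matrix (Fin d) (Fin d) ℂ))ᴴ) *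
          ((U ⊗ₖ (1 : HMat (Fin d)))ᴴ * maxEnt (Fin d) *
            (U ⊗ₖ (1 : HMat (Fin d))))).trace).re ≤ fefVal ρ V₀ := by
      intro V
      have h3 : (((kconj (V : Matrix (Fin d) (Fin d) ℂ) * ρ2 *
          (kconj (V : Matrix (Fin d) (Fin d) ℂ))ᴴ) *
          ((U ⊗ₖ (1 : HMat (Fin d)))ᴴ * maxEnt (Fin d) * (U ⊗ₖ (1 : HMat (Fin d))))).trace)
          = (maxEnt (Fin d) * gmat U (kconj (V : Matrix (Fin d) (Fin d) ℂ) * ρ2 *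
              (kconj (V : Matrix (Fin d) (Fin d) ℂ))ᴴ)).trace := by
        rw [← trace_sandwich]
        exact Matrix.trace_mul_comm _ _
      rw [h3, fef_pointwise V.2 U ρ2]
      have hW : (V : Matrix (Fin d) (Fin d) ℂ)ᴴ * U * (V : Matrix (Fin d) (Fin d) ℂ)
          ∈ Matrix.unitaryGroup (Fin d) ℂ := by
        refine mul_mem (mul_mem ?_ hU) V.2
        rw [← Matrix.star_eq_conjTranspose]
        exact Unitary.star_mem V.2
      have hmem2 : ((maxEnt (Fin d) * gmat ((V : Matrix (Fin d) (Fin d) ℂ)ᴴ * U *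
          (V : Matrix (Fin d) (Fin d) ℂ)) ρ2).trace).re ∈ fefSet ρ :=
        hsetρ2 ▸ ⟨_, hW, rfl⟩
      exact hboundρ _ hmem2
    calc (∫ V : Matrix.unitaryGroup (Fin d) ℂ,
          (((kconj (V : Matrix (Fin d) (Fin d) ℂ) * ρ2 *
            (kconj (V : Matrix (Fin d) (Fin d) ℂ))ᴴ) *
            ((U ⊗ₖ (1 : HMat (Fin d)))ᴴ * maxEnt (Fin d) *
              (U ⊗ₖ (1 : HMat (Fin d))))).trace).re ∂μ)
        ≤ ∫ _ : Matrix.unitaryGroup (Fin d) ℂ, fefVal ρ V₀ ∂μ := by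
          refine integral_mono ?_ (integrable_const _) hptle
          exact cont_integrable (cont_re_trace _ _ (cont_conjd ρ2))
      _ = fefVal ρ V₀ := by simp [measure_univ]
  have hfef_tw : fef (twirl μ ρ2) = ((maxEnt (Fin d) * ρ2).trace).re := by
    rw [fef_eq_sSup]
    apply le_antisymm
    · rw [hover]
      exact csSup_le ⟨_, htw_mem⟩ htw_le
    · rw [← htw_ov]
      exact le_csSup ⟨fefVal ρ V₀, htw_le⟩ htw_mem
  -- steering objective
  set sf : Matrix.unitaryGroup (Fin d) ℂ → ℝ := fun V =>
    ∑ x, ∑ a, ((ρ * (((((V : Matrix (Fin d) (Fin d) ℂ) * U₀)ᴴ) * E a x *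
      ((V : Matrix (Fin d) (Fin d) ℂ) * U₀)) ⊗ₖ
      ((mconj (V : Matrix (Fin d) (Fin d) ℂ))ᴴ * F a x *
        (mconj (V : Matrix (Fin d) (Fin d) ℂ))))).trace).re with hsfdef
  have hkE : ∀ (a : A) (x : X), Continuous fun V : Matrix.unitaryGroup (Fin d) ℂ =>
      (((V : Matrix (Fin d) (Fin d) ℂ) * U₀)ᴴ) * E a x *
        ((V : Matrix (Fin d) (Fin d) ℂ) * U₀) := fun a x =>
    ((cont_coe.matrix_mul continuous_const).matrix_conjTranspose.matrix_mul
      continuous_const).matrix_mul (cont_coe.matrix_mul continuous_const)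
  have hkF : ∀ (a : A) (x : X), Continuous fun V : Matrix.unitaryGroup (Fin d) ℂ =>
      ((mconj (V : Matrix (Fin d) (Fin d) ℂ))ᴴ * F a x *
        (mconj (V : Matrix (Fin d) (Fin d) ℂ))) := fun a x =>
    (cont_mconj.matrix_conjTranspose.matrix_mul continuous_const).matrix_mul cont_mconj
  have hterm_cont : ∀ (a : A) (x : X), Continuous fun V : Matrix.unitaryGroup (Fin d) ℂ =>
      ((ρ * (((((V : Matrix (Fin d) (Fin d) ℂ) * U₀)ᴴ) * E a x *
        ((V : Matrix (Fin d) (Fin d) ℂ) * U₀)) ⊗ₖ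
        ((mconj (V : Matrix (Fin d) (Fin d) ℂ))ᴴ * F a x *
          (mconj (V : Matrix (Fin d) (Fin d) ℂ))))).trace).re := by
    intro a x
    apply Complex.continuous_re.comp
    apply Continuous.matrix_trace
    apply Continuous.matrix_mul continuous_const
    exact continuous_matrix fun p q =>
      ((hkE a x).matrix_elem p.1 q.1).mul ((hkF a x).matrix_elem p.2 q.2)
  have hscont : Continuous sf := by
    apply continuous_finset_sum
    intro x _
    exact continuous_finset_sum _ fun a _ => hterm_cont a x
  obtain ⟨Vs, -, hsmax'⟩ :=
    isCompact_univ.exists_isMaxOn Set.univ_nonempty hscont.continuousOn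
  have hsmax : ∀ V, sf V ≤ sf Vs := fun V => hsmax' (Set.mem_univ V)
  refine ⟨ρ2, (Vs : Matrix (Fin d) (Fin d) ℂ) * U₀,
    mconj (Vs : Matrix (Fin d) (Fin d) ℂ), ?_, ?_, ?_, hfef_tw, hoverall, hfef_ρ2, ?_⟩
  · constructor
    · exact hρ.1.mul_mul_conjTranspose_same _
    · have hkron1 : (U₀ ⊗ₖ (1 : HMat (Fin d)))ᴴ * (U₀ ⊗ₖ (1 : HMat (Fin d)))
          = (1 : Matrix (Fin d × Fin d) (Fin d × Fin d) ℂ) := by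
        rw [kron_conjTranspose, Matrix.conjTranspose_one, ← Matrix.mul_kronecker_mul,
          one_mul]
        rw [show U₀ᴴ * U₀ = 1 from by
          rw [← Matrix.star_eq_conjTranspose]; exact hU₀.1]
        rw [Matrix.one_kronecker_one]
      rw [hρ2def, Matrix.trace_mul_cycle, hkron1, one_mul, hρ.2]
  · exact mul_mem Vs.2 hU₀
  · exact mconj_mem Vs.2
  · -- the steering inequality
    have hval_L : steeringValue
        (fun a x => (mconj (Vs : Matrix (Fin d) (Fin d) ℂ))ᴴ * F a x *
          mconj (Vs : Matrix (Fin d) (Fin d) ℂ))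
        (inducedAssemblage ρ (fun a x =>
          ((Vs : Matrix (Fin d) (Fin d) ℂ) * U₀)ᴴ * E a x *
            ((Vs : Matrix (Fin d) (Fin d) ℂ) * U₀))) = sf Vs := by
      refine Finset.sum_congr rfl fun x _ => Finset.sum_congr rfl fun a _ => ?_
      show (((mconj (Vs : Matrix (Fin d) (Fin d) ℂ))ᴴ * F a x *
          mconj (Vs : Matrix (Fin d) (Fin d) ℂ) *
          ptraceA (ρ * ((((Vs : Matrix (Fin d) (Fin d) ℂ) * U₀)ᴴ * E a x *
            ((Vs : Matrix (Fin d) (Fin d) ℂ) * U₀)) ⊗ₖ (1 : HMat (Fin d))))).trace).re = _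
      rw [trace_F_ptraceA]
    have hval_R : steeringValue F (inducedAssemblage (twirl μ ρ2) E)
        = ∫ V, sf V ∂μ := by
      have hstep : ∀ (a : A) (x : X),
          ((F a x * (inducedAssemblage (twirl μ ρ2) E a x)).trace).re
          = ∫ V : Matrix.unitaryGroup (Fin d) ℂ,
              ((ρ * (((((V : Matrix (Fin d) (Fin d) ℂ) * U₀)ᴴ) * E a x *
                ((V : Matrix (Fin d) (Fin d) ℂ) * U₀)) ⊗ₖ
                ((mconj (V : Matrix (Fin d) (Fin d) ℂ))ᴴ * F a x *
                  (mconj (V : Matrix (Fin d) (Fin d) ℂ))))).trace).re ∂μ := by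
        intro a x
        show ((F a x * ptraceA (twirl μ ρ2 * (E a x ⊗ₖ (1 : HMat (Fin d))))).trace).re = _
        rw [trace_F_ptraceA, re_trace_twirl_mul]
        refine integral_congr_ae (Filter.Eventually.of_forall fun V => ?_)
        show ((kconj (V : Matrix (Fin d) (Fin d) ℂ) * ρ2 *
            (kconj (V : Matrix (Fin d) (Fin d) ℂ))ᴴ * (E a x ⊗ₖ F a x)).trace).re = _
        rw [hρ2def]
        exact congrArg Complex.re (steer_pointwise (V : Matrix (Fin d) (Fin d) ℂ) U₀
          (E a x) (F a x) ρ)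
      calc steeringValue F (inducedAssemblage (twirl μ ρ2) E)
          = ∑ x, ∑ a, ∫ V : Matrix.unitaryGroup (Fin d) ℂ,
              ((ρ * (((((V : Matrix (Fin d) (Fin d) ℂ) * U₀)ᴴ) * E a x *
                ((V : Matrix (Fin d) (Fin d) ℂ) * U₀)) ⊗ₖ
                ((mconj (V : Matrix (Fin d) (Fin d) ℂ))ᴴ * F a x *
                  (mconj (V : Matrix (Fin d) (Fin d) ℂ))))).trace).re ∂μ :=
            Finset.sum_congr rfl fun x _ => Finset.sum_congr rfl fun a _ => hstep a x
        _ = ∑ x, ∫ V : Matrix.unitaryGroup (Fin d) ℂ, ∑ a,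
              ((ρ * (((((V : Matrix (Fin d) (Fin d) ℂ) * U₀)ᴴ) * E a x *
                ((V : Matrix (Fin d) (Fin d) ℂ) * U₀)) ⊗ₖ
                ((mconj (V : Matrix (Fin d) (Fin d) ℂ))ᴴ * F a x *
                  (mconj (V : Matrix (Fin d) (Fin d) ℂ))))).trace).re ∂μ :=
            Finset.sum_congr rfl fun x _ =>
              (integral_finset_sum _ fun a _ => cont_integrable (hterm_cont a x)).symm
        _ = ∫ V, sf V ∂μ :=
            (integral_finset_sum _ fun x _ => cont_integrable
              (continuous_finset_sum _ fun a _ => hterm_cont a x)).symm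
    have hsle : (∫ V, sf V ∂μ) ≤ sf Vs := by
      calc (∫ V, sf V ∂μ) ≤ ∫ _, sf Vs ∂μ :=
            integral_mono (cont_integrable hscont) (integrable_const _) hsmax
        _ = sf Vs := by simp [measure_univ]
    show steeringFraction _ _ ≥ steeringFraction _ _
    unfold steeringFraction
    rw [steeringBound_conj (mconj_mem Vs.2) F, hval_L, hval_R]
    exact div_le_div_of_nonneg_right hsle hωs.le 

end QSteer

end
end
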